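/- Let V be a finite set of n nodes and σ : Finset V → ℝ a monotone and submodular set function. Let r be a ranking of V such that the values M_r(v), v ∈ V, are pairwise distinct, and let r' be the ranking of V that orders V in decreasing order of M_r. Then for every k with 1 ≤ k ≤ n such that the top-k sets differ, T_r(k) ≠ T_{r'}(k), the influence spread strictly increases: I_r(k) < I_{r'}(k). -/

import Mathlib

open Finset

variable {V : Type*} [Fintype V] [DecidableEq V]

/-- The set of top-`k` nodes of ranking `r` (positions `1,…,k`, i.e. indices `< k`). -/
def topk {n : ℕ} (r : Fin n ≃ V) (k : ℕ) : Finset V :=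
  (Finset.univ.filter fun i : Fin n => (i : ℕ) < k).image r

/-- Ranking-based marginal influence spread `M_r(v) = σ(T_r(i)) − σ(T_r(i−1))`
where `i` is the (1-based) position of `v` in `r`. -/
noncomputable def margM {n : ℕ} (σ : Finset V → ℝ) (r : Fin n ≃ V) (v : V) : ℝ :=
  σ (topk r ((r.symm v : ℕ) + 1)) - σ (topk r (r.symm v))

/-- Influence spread of the top-`k` nodes: `I_r(k) = Σ_{i=1}^k M_r(v_{r_i})`. -/
noncomputable def inflI {n : ℕ} (σ : Finset V → ℝ) (r : Fin n ≃ V) (k : ℕ) : ℝ :=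
  ∑ i ∈ Finset.univ.filter (fun i : Fin n => (i : ℕ) < k), margM σ r (r i)

lemma mem_topk {n : ℕ} (r : Fin n ≃ V) (k : ℕ) (v : V) :
    v ∈ topk r k ↔ (r.symm v : ℕ) < k := by
  simp only [topk, mem_image, mem_filter, mem_univ, true_and]
  constructor
  · rintro ⟨i, hi, rfl⟩; simpa using hi
  · intro h; exact ⟨r.symm v, h, r.apply_symm_apply v⟩

lemma topk_succ {n : ℕ} (r : Fin n ≃ V) (i : Fin n) :
    topk r ((i : ℕ) + 1) = insert (r i) (topk r (i : ℕ)) := by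
  ext v
  simp only [mem_topk, mem_insert, Nat.lt_succ_iff, le_iff_lt_or_eq]
  constructor
  · rintro (h | h)
    · exact Or.inr h
    · left
      have : r.symm v = i := Fin.ext h
      rw [← this, r.apply_symm_apply]
  · rintro (rfl | h)
    · right; simp
    · exact Or.inl h

lemma topk_zero {n : ℕ} (r : Fin n ≃ V) : topk r 0 = ∅ := by
  ext v; simp [mem_topk]

lemma not_mem_topk_self {n : ℕ} (r : Fin n ≃ V) (i : Fin n) : r i ∉ topk r (i : ℕ) := by
  simp [mem_topk]

lemma inflI_eq {n : ℕ} (σ : Finset V → ℝ) (r : Fin n ≃ V) :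
    ∀ k : ℕ, k ≤ n → inflI σ r k = σ (topk r k) - σ ∅ := by
  intro k
  induction k with
  | zero => intro _; simp [inflI, topk_zero]
  | succ k ih =>
    intro hk
    have hk' : k < n := hk
    set ik : Fin n := ⟨k, hk'⟩ with hik
    have hfilter : (Finset.univ.filter fun i : Fin n => (i : ℕ) < k + 1) =
        insert ik (Finset.univ.filter fun i : Fin n => (i : ℕ) < k) := by
      ext i
      simp only [mem_filter, mem_univ, true_and, mem_insert, Fin.ext_iff, hik, Fin.val_mk]
      omega
    have hnot : ik ∉ Finset.univ.filter fun i : Fin n => (i : ℕ) < k := by simp [hik]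
    have hm : margM σ r (r ik) = σ (topk r (k + 1)) - σ (topk r k) := by
      simp [margM, r.symm_apply_apply, hik]
    rw [inflI, hfilter, Finset.sum_insert hnot, hm]
    have := ih (le_of_lt hk')
    rw [inflI] at this
    rw [this]; ring

lemma sum_margM_le {n : ℕ} (σ : Finset V → ℝ)
    (hsub : ∀ S T : Finset V, S ⊆ T → ∀ v ∉ T,
      σ (insert v T) - σ T ≤ σ (insert v S) - σ S)
    (r : Fin n ≃ V) : ∀ S : Finset V, σ ∅ + ∑ v ∈ S, margM σ r v ≤ σ S := by
  intro S
  induction S using Finset.strongInduction with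
  | _ S ih =>
    rcases S.eq_empty_or_nonempty with rfl | hS
    · simp
    · obtain ⟨v, hv, hmax⟩ := S.exists_max_image (fun w => (r.symm w : ℕ)) hS
      have herase : S.erase v ⊂ S := Finset.erase_ssubset hv
      have hsubset : S.erase v ⊆ topk r (r.symm v : ℕ) := by
        intro w hw
        rw [mem_topk]
        have hle := hmax w (Finset.mem_of_mem_erase hw)
        have hne : w ≠ v := Finset.ne_of_mem_erase hw
        have : r.symm w ≠ r.symm v := fun h => hne (r.symm.injective h)
        omega
      have hvnot : v ∉ topk r (r.symm v : ℕ) := by simp [mem_topk]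
      have hkey := hsub (S.erase v) (topk r (r.symm v : ℕ)) hsubset v hvnot
      rw [Finset.insert_erase hv] at hkey
      have hins : topk r ((r.symm v : ℕ) + 1) = insert v (topk r (r.symm v : ℕ)) := by
        rw [topk_succ, r.apply_symm_apply]
      have hmarg : margM σ r v ≤ σ S - σ (S.erase v) := by
        rw [margM, hins]; exact hkey
      have hih := ih (S.erase v) herase
      have hsum : ∑ w ∈ S, margM σ r w = margM σ r v + ∑ w ∈ S.erase v, margM σ r w :=
        (Finset.add_sum_erase S _ hv).symm
      rw [hsum]; linarith

lemma card_topk {n : ℕ} (r : Fin n ≃ V) {k : ℕ} (hk : k ≤ n) : (topk r k).card = k := by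
  rw [topk, Finset.card_image_of_injective _ r.injective]
  rw [Finset.card_nbij (fun i : Fin n => (i : ℕ)) (t := Finset.range k)
    (by intro a ha; simp at ha ⊢; exact ha)
    (by intro a _ b _ h; exact Fin.ext h)
    (by intro m hm; simp at hm ⊢; exact ⟨⟨m, lt_of_lt_of_le hm hk⟩, hm, rfl⟩),
    Finset.card_range]

lemma sum_topk {n : ℕ} (r : Fin n ≃ V) (k : ℕ) (f : V → ℝ) :
    ∑ i ∈ Finset.univ.filter (fun i : Fin n => (i : ℕ) < k), f (r i) =
      ∑ v ∈ topk r k, f v := by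
  rw [topk, Finset.sum_image (fun a _ b _ h => r.injective h)]

/-- if `σ` is monotone and submodular, the values `M_r(v)` are pairwise
distinct, and `r'` orders `V` in decreasing order of `M_r`, then for every `k` with
`1 ≤ k ≤ n` such that `T_r(k) ≠ T_{r'}(k)`, we have `I_r(k) < I_{r'}(k)`. -/
theorem inflI_lt_inflI_sorted_of_topk_ne {n : ℕ} (σ : Finset V → ℝ)
    (hmono : ∀ S T : Finset V, S ⊆ T → σ S ≤ σ T)
    (hsub : ∀ S T : Finset V, S ⊆ T → ∀ v ∉ T,
      σ (insert v T) - σ T ≤ σ (insert v S) - σ S)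
    (r r' : Fin n ≃ V)
    (hdist : Function.Injective (margM σ r))
    (hr' : ∀ i j : Fin n, i ≤ j → margM σ r (r' j) ≤ margM σ r (r' i)) :
    ∀ k : ℕ, 1 ≤ k → k ≤ n → topk r k ≠ topk r' k → inflI σ r k < inflI σ r' k := by
  intro k hk1 hkn hne
  set f := margM σ r with hf
  set S := topk r k with hS
  set T := topk r' k with hT
  have hcS : S.card = k := card_topk r hkn
  have hcT : T.card = k := card_topk r' hkn
  have helem : ∀ u ∈ T, ∀ w ∉ T, f w < f u := by
    intro u hu w hw
    have hi : (r'.symm u : ℕ) < k := (mem_topk r' k u).1 hu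
    have hj : ¬ (r'.symm w : ℕ) < k := fun h => hw ((mem_topk r' k w).2 h)
    have hle : r'.symm u ≤ r'.symm w := by rw [Fin.le_def]; omega
    have hle2 := hr' _ _ hle
    rw [r'.apply_symm_apply, r'.apply_symm_apply] at hle2
    refine lt_of_le_of_ne hle2 (fun h => ?_)
    exact hw (hdist h ▸ hu)
  have hdS : (S \ T).Nonempty := by
    rw [Finset.sdiff_nonempty]
    intro hsub'
    exact hne (Finset.eq_of_subset_of_card_le hsub' (by omega))
  have hcard : (S \ T).card = (T \ S).card := Finset.card_sdiff_comm (hcS.trans hcT.symm)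
  let e : ↥(S \ T) ≃ ↥(T \ S) := Finset.equivOfCardEq hcard
  have h1 : ∑ x ∈ S \ T, f x < ∑ x ∈ T \ S, f x := by
    rw [← Finset.sum_coe_sort (S \ T) f, ← Finset.sum_coe_sort (T \ S) f,
      ← Equiv.sum_comp e (fun y : ↥(T \ S) => f (y : V))]
    haveI : Nonempty ↥(S \ T) := hdS.to_subtype
    apply Finset.sum_lt_sum_of_nonempty Finset.univ_nonempty
    intro x _
    have hx : (x : V) ∉ T := (Finset.mem_sdiff.1 x.2).2
    have hex : ((e x : V)) ∈ T := (Finset.mem_sdiff.1 (e x).2).1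
    exact helem _ hex _ hx
  have h2 : ∑ v ∈ S, f v < ∑ v ∈ T, f v := by
    have e1 := Finset.sum_inter_add_sum_sdiff S T f
    have e2 := Finset.sum_inter_add_sum_sdiff T S f
    rw [Finset.inter_comm T S] at e2
    linarith
  have hI : inflI σ r k = ∑ v ∈ S, f v := sum_topk r k f
  have hI' : inflI σ r' k = σ T - σ ∅ := inflI_eq σ r' k hkn
  have hB := sum_margM_le σ hsub r T
  linarith
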